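/- Surrogate dispersion for erased fair coin flips: in the erased-fair-coin-flips setting with δ/2 < d < 1/2 and λ* = log( (1 − δ/2 − d)/(d − δ/2) ), the surrogate d̄-tilted information ȷ_X(X, d) equals −λ*·d plus log( 2/(1 + exp(−λ*)) ) with probability 1 − δ and λ*/2 with probability δ; hence the surrogate rate-dispersion function equals V(d) = δ(1 − δ)·log²cosh( λ*/(2 log e) ) = Ṽ(d) − (δ/4)·(λ*)², where Ṽ(d) = δ(1 − δ)·log²cosh( λ*/(2 log e) ) + (δ/4)·(λ*)² is the noisy rate-dispersion function. -/

import Mathlib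

open scoped BigOperators

noncomputable section

/-- Equiprobable binary source. -/
def PSb : Bool → ℝ := fun _ => 1 / 2

/-- Binary erasure channel with erasure rate `δ`; `none` is the erasure symbol `?`. -/
def Wbec (δ : ℝ) : Bool → Option Bool → ℝ :=
  fun s x => if x = some s then 1 - δ else if x = none then δ else 0

/-- Bit-error (Hamming) distortion measured against the clean source. -/
def dstH : Bool → Bool → ℝ := fun s z => if s = z then 0 else 1

/-- Distribution of the channel output `X`. -/
def PXbec (δ : ℝ) (x : Option Bool) : ℝ := ∑ s, PSb s * Wbec δ s x

/-- The optimal backward channel `P_{X|Z*}`. -/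
def backB (δ d : ℝ) : Bool → Option Bool → ℝ :=
  fun b x => if x = some b then 1 - d - δ / 2 else if x = none then δ else d - δ / 2

/-- The optimal forward test channel `Q*(z|x) = P_{Z*}(z) P_{X|Z*}(x|z) / P_X(x)`. -/
def QstBes (δ d : ℝ) : Option Bool → Bool → ℝ :=
  fun x z => (1 / 2 * backB δ d z x) / PXbec δ x

/-- Output marginal of the optimal test channel. -/
def PZstBes (δ d : ℝ) (z : Bool) : ℝ := ∑ x, PXbec δ x * QstBes δ d x z

/-- Information density `ı_{X;Z*}(x; z) = log (Q*(z|x) / P_{Z*}(z))`. -/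
def iXZ (δ d : ℝ) (x : Option Bool) (z : Bool) : ℝ :=
  Real.log (QstBes δ d x z / PZstBes δ d z)

/-- Noisy d-tilted information evaluated with the optimal reproduction. -/
def jtBes (δ d lam : ℝ) (s : Bool) (x : Option Bool) (z : Bool) : ℝ :=
  iXZ δ d x z + lam * dstH s z - lam * d

/-- Joint mass of `(S, X, Z*)` under `PSb ⊗ Wbec δ ⊗ QstBes δ d`. -/
def massBes (δ d : ℝ) (s : Bool) (x : Option Bool) (z : Bool) : ℝ :=
  PSb s * Wbec δ s x * QstBes δ d x z

/-- Surrogate d̄-tilted information, obtained by averaging the noisy d-tilted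
information over `P_{S|X=x}` (and over the optimal reproduction `Z*`). -/
def jXBes (δ d lam : ℝ) (x : Option Bool) : ℝ :=
  ∑ s, ∑ z, (PSb s * Wbec δ s x / PXbec δ x) * QstBes δ d x z * jtBes δ d lam s x z

/-- The noisy rate-dispersion function `Ṽ(d) = Var[ȷ̃_{S,X}(S,X,d)]`. -/
def VtBes (δ d lam : ℝ) : ℝ :=
  (∑ s, ∑ x, ∑ z, massBes δ d s x z * (jtBes δ d lam s x z) ^ 2)
    - (∑ s, ∑ x, ∑ z, massBes δ d s x z * jtBes δ d lam s x z) ^ 2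

set_option maxHeartbeats 1000000

lemma PXbec_some (δ : ℝ) (t : Bool) : PXbec δ (some t) = (1 - δ)/2 := by
  cases t <;> · simp [PXbec, PSb, Wbec, Fintype.sum_bool]
                ring

lemma PXbec_none (δ : ℝ) : PXbec δ none = δ := by
  simp [PXbec, PSb, Wbec, Fintype.sum_bool]

lemma QstBes_some (δ d : ℝ) (t z : Bool) :
    QstBes δ d (some t) z = (if z = t then 1 - d - δ/2 else d - δ/2) / (1 - δ) := by
  have key : ∀ A : ℝ, (1/2 * A) / ((1-δ)/2) = A / (1-δ) := by
    intro A
    rw [show (1:ℝ)/2 * A = A * (1/2) by ring, show (1-δ)/2 = (1-δ)*(1/2) by ring,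
        mul_div_mul_right _ _ (by norm_num : (1:ℝ)/2 ≠ 0)]
  simp only [QstBes, backB, PXbec_some, key, Option.some.injEq,
    reduceCtorEq, if_false]
  by_cases h : z = t
  · simp [h]
  · rw [if_neg (fun ht : t = z => h ht.symm)]
    simp [h]

lemma QstBes_none (δ d : ℝ) (hδ : δ ≠ 0) (z : Bool) : QstBes δ d none z = 1/2 := by
  simp [QstBes, backB, PXbec_none]
  field_simp

lemma PZstBes_eq (δ d : ℝ) (hδ : δ ≠ 0) (h1 : (1:ℝ) - δ ≠ 0) (z : Bool) :
    PZstBes δ d z = 1/2 := by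
  simp only [PZstBes, Fintype.sum_option, Fintype.sum_bool, PXbec_some, PXbec_none,
    QstBes_some, QstBes_none δ d hδ]
  cases z <;> simp <;> field_simp <;> ring

/-- **Surrogate dispersion for erased fair coin flips** (Eqs. (50)–(52)): with
`λ* = log((1 − δ/2 − d)/(d − δ/2))`, the surrogate d̄-tilted information equals `−λ* d`
plus `log(2/(1+e^{−λ*}))` with probability `1−δ` and `λ*/2` with probability `δ`; hence
`V(d) = δ(1−δ) log² cosh(λ*/(2 log e)) = Ṽ(d) − (δ/4)(λ*)²`, where
`Ṽ(d) = δ(1−δ) log² cosh(λ*/(2 log e)) + (δ/4)(λ*)²` is the noisy rate-dispersion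
function. -/
theorem surrogate_dispersion_erased_fair_coin_flips
    (δ d : ℝ) (hδ0 : 0 < δ) (hδ1 : δ < 1)
    (hd1 : δ / 2 < d) (hd2 : d < 1 / 2)
    (lam : ℝ) (hlam : lam = Real.log ((1 - δ / 2 - d) / (d - δ / 2))) :
    -- value log(2/(1+exp(−λ*))) − λ* d, w.p. 1−δ (no erasure)
    (∑ x, PXbec δ x *
        (if x ≠ none ∧
            jXBes δ d lam x = -lam * d + Real.log (2 / (1 + Real.exp (-lam)))
         then (1:ℝ) else 0)) = 1 - δ ∧
    -- value λ*/2 − λ* d, w.p. δ (erasure)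
    (∑ x, PXbec δ x *
        (if x = none ∧ jXBes δ d lam x = -lam * d + lam / 2
         then (1:ℝ) else 0)) = δ ∧
    -- V(d) = Var[ȷ_X(X,d)] = δ(1−δ) log² cosh(λ*/(2 log e))
    ((∑ x, PXbec δ x * (jXBes δ d lam x) ^ 2) - (∑ x, PXbec δ x * jXBes δ d lam x) ^ 2)
      = δ * (1 - δ) * Real.log (Real.cosh (lam / (2 * Real.log (Real.exp 1)))) ^ 2 ∧
    -- V(d) = Ṽ(d) − (δ/4)(λ*)²
    ((∑ x, PXbec δ x * (jXBes δ d lam x) ^ 2) - (∑ x, PXbec δ x * jXBes δ d lam x) ^ 2)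
      = VtBes δ d lam - δ / 4 * lam ^ 2 ∧
    -- Ṽ(d) = δ(1−δ) log² cosh(λ*/(2 log e)) + (δ/4)(λ*)²
    VtBes δ d lam
      = δ * (1 - δ) * Real.log (Real.cosh (lam / (2 * Real.log (Real.exp 1)))) ^ 2
        + δ / 4 * lam ^ 2 := by
  have h1δ : (0:ℝ) < 1 - δ := by linarith
  have ha : (0:ℝ) < d - δ/2 := by linarith
  have hb : (0:ℝ) < 1 - d - δ/2 := by linarith
  have hδ0' : δ ≠ 0 := ne_of_gt hδ0
  have h1δ' : (1:ℝ) - δ ≠ 0 := ne_of_gt h1δ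
  set M := Real.log (2*(d - δ/2)/(1-δ)) with hM
  have ha' : (0:ℝ) < 2*(d-δ/2)/(1-δ) := by positivity
  have hb' : (0:ℝ) < 2*(1-d-δ/2)/(1-δ) := by positivity
  have hlam' : lam = Real.log (2*(1-d-δ/2)/(1-δ)) - M := by
    rw [hlam, hM, ← Real.log_div (ne_of_gt hb') (ne_of_gt ha')]
    congr 1
    field_simp
    ring
  have hL : Real.log (2*(1-d-δ/2)/(1-δ)) = lam + M := by rw [hlam']; ring
  have hiXZ_some : ∀ t z : Bool, iXZ δ d (some t) z = (if z = t then lam else 0) + M := by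
    intro t z
    rw [iXZ, QstBes_some, PZstBes_eq δ d hδ0' h1δ']
    have h2 : (if z = t then 1-d-δ/2 else d-δ/2)/(1-δ) / (1/2)
        = 2*(if z = t then 1-d-δ/2 else d-δ/2)/(1-δ) := by ring
    rw [h2]
    by_cases h : z = t
    · simp only [h, if_true]
      rw [hL]
    · simp only [h, if_false, zero_add]
      exact hM.symm
  have hiXZ_none : ∀ z : Bool, iXZ δ d none z = 0 := by
    intro z
    rw [iXZ, QstBes_none δ d hδ0', PZstBes_eq δ d hδ0' h1δ']
    norm_num
  have hjX_some : ∀ t : Bool, jXBes δ d lam (some t) = lam + M - lam * d := by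
    intro t
    cases t <;>
    · simp only [jXBes, Fintype.sum_bool, jtBes, PSb, Wbec, PXbec_some, QstBes_some,
        hiXZ_some, dstH, Option.some.injEq, reduceCtorEq, reduceIte]
      norm_num
      field_simp
      ring
  have hjX_none : jXBes δ d lam none = lam/2 - lam * d := by
    simp only [jXBes, Fintype.sum_bool, jtBes, PSb, Wbec, PXbec_none,
      QstBes_none δ d hδ0', hiXZ_none, dstH, Option.some.injEq, reduceCtorEq, reduceIte]
    norm_num
    field_simp
    ring
  -- exp and log facts
  have hexp : Real.exp (-lam) = (d - δ/2)/(1 - d - δ/2) := by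
    rw [hlam, ← Real.log_inv,
      Real.exp_log (inv_pos.mpr (div_pos (by linarith) ha)), inv_div]
    ring_nf
  have hlog2 : Real.log (2/(1 + Real.exp (-lam))) = lam + M := by
    have h31 : 1 + (d - δ/2)/(1 - d - δ/2) = (1-δ)/(1-d-δ/2) := by
      rw [eq_div_iff (ne_of_gt hb), add_mul, one_mul, div_mul_cancel₀ _ (ne_of_gt hb)]
      ring
    have h3 : 2/(1 + (d - δ/2)/(1 - d - δ/2)) = 2*(1-d-δ/2)/(1-δ) := by
      rw [h31, div_div_eq_mul_div]
    rw [hexp, h3, hL]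
  have hcoshval : Real.log (Real.cosh (lam / (2 * Real.log (Real.exp 1))))
      = -(lam/2 + M) := by
    have h21 : lam / (2 * Real.log (Real.exp 1)) = lam / 2 := by
      rw [Real.log_exp]; norm_num
    have hexplam : Real.exp lam = (1 - δ/2 - d)/(d - δ/2) := by
      rw [hlam, Real.exp_log (div_pos (by linarith) ha)]
    have hcosh_eq : Real.cosh (lam/2) = Real.exp (-(lam/2)) * ((1-δ)/(2*(d-δ/2))) := by
      rw [Real.cosh_eq]
      have h2 : Real.exp (lam/2) = Real.exp (-(lam/2)) * Real.exp lam := by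
        rw [← Real.exp_add]; ring_nf
      rw [h2, hexplam]
      have hfrac : (1 - δ/2 - d)/(d - δ/2) + 1 = (1-δ)/(d - δ/2) := by
        rw [div_add' _ _ _ (ne_of_gt ha)]
        congr 1
        ring
      calc (Real.exp (-(lam/2)) * ((1 - δ/2 - d)/(d - δ/2)) + Real.exp (-(lam/2)))/2
          = Real.exp (-(lam/2)) * (((1 - δ/2 - d)/(d - δ/2) + 1)/2) := by ring
        _ = Real.exp (-(lam/2)) * (((1-δ)/(d - δ/2))/2) := by rw [hfrac]
        _ = Real.exp (-(lam/2)) * ((1-δ)/(2*(d - δ/2))) := by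
              rw [div_div, mul_comm (d - δ/2) 2]
    rw [h21, hcosh_eq, Real.log_mul (Real.exp_ne_zero _) (by positivity), Real.log_exp,
      show (1-δ)/(2*(d-δ/2)) = (2*(d-δ/2)/(1-δ))⁻¹ by rw [inv_div], Real.log_inv, ← hM]
    ring
  have hV : ((∑ x, PXbec δ x * (jXBes δ d lam x) ^ 2)
      - (∑ x, PXbec δ x * jXBes δ d lam x) ^ 2) = δ*(1-δ)*(lam/2 + M)^2 := by
    simp only [Fintype.sum_option, Fintype.sum_bool, hjX_some, hjX_none,
      PXbec_some, PXbec_none]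
    ring
  have hVt : VtBes δ d lam = δ*(1-δ)*(lam/2 + M)^2 + δ/4*lam^2 := by
    simp only [VtBes, massBes, jtBes, Fintype.sum_option, Fintype.sum_bool, PSb, Wbec,
      dstH, PXbec_some, PXbec_none, QstBes_some, QstBes_none δ d hδ0',
      hiXZ_some, hiXZ_none, Option.some.injEq, reduceCtorEq, reduceIte]
    norm_num
    field_simp
    ring
  refine ⟨?_, ?_, ?_, ?_, ?_⟩
  · simp only [Fintype.sum_option, Fintype.sum_bool, PXbec_some, PXbec_none]
    rw [if_neg (by simp), if_pos ⟨by simp, by rw [hjX_some, hlog2]; ring⟩,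
      if_pos ⟨by simp, by rw [hjX_some, hlog2]; ring⟩]
    ring
  · simp only [Fintype.sum_option, Fintype.sum_bool, PXbec_some, PXbec_none]
    rw [if_pos ⟨by trivial, by rw [hjX_none]; ring⟩, if_neg (by simp), if_neg (by simp)]
    ring
  · rw [hV, hcoshval]; ring
  · rw [hV, hVt]; ring
  · rw [hVt, hcoshval]; ring
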